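/- Let (a_t)_{t≥1} and (b_t)_{t≥1} be sequences of nonnegative real numbers such that Σ_{t=1}^∞ a_t = ∞, Σ_{t=1}^∞ a_t b_t < ∞, and there exists K > 0 with |b_{t+1} − b_t| ≤ K a_t for all t. Then b_t → 0 as t → ∞. -/

import Mathlib

open Filter

/-- If `a_t, b_t ≥ 0`, `Σ a_t = ∞`, `Σ a_t b_t < ∞`, and `|b_{t+1} − b_t| ≤ K a_t`
for some `K > 0`, then `b_t → 0`. -/
theorem stmt_13 (a b : ℕ → ℝ) (ha : ∀ t, 0 ≤ a t) (hb : ∀ t, 0 ≤ b t)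
    (hdiv : Tendsto (fun n => ∑ t ∈ Finset.range n, a t) atTop atTop)
    (hsum : Summable fun t => a t * b t)
    (K : ℝ) (hK : 0 < K) (hdiff : ∀ t, |b (t + 1) - b t| ≤ K * a t) :
    Tendsto b atTop (nhds 0) := by
  have hab : ∀ t, 0 ≤ a t * b t := fun t => mul_nonneg (ha t) (hb t)
  set S := ∑' t, a t * b t with hSdef
  have hP : ∀ n, ∑ t ∈ Finset.range n, a t * b t ≤ S :=
    fun n => Summable.sum_le_tsum _ (fun i _ => hab i) hsum
  have hIco : ∀ m n, ∑ t ∈ Finset.Ico m n, a t * b t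
      ≤ S - ∑ t ∈ Finset.range m, a t * b t := by
    intro m n
    rcases le_or_gt m n with h | h
    · rw [Finset.sum_Ico_eq_sub _ h]
      linarith [hP n]
    · rw [Finset.Ico_eq_empty (by omega)]
      simp
      exact hP m
  -- Step 1: b dips below any ε infinitely often
  have hsmall : ∀ ε : ℝ, 0 < ε → ∀ M : ℕ, ∃ n, M ≤ n ∧ b n ≤ ε := by
    intro ε hε M
    by_contra h
    push_neg at h
    have key : ∀ n, ∑ t ∈ Finset.range n, a t
        ≤ (S - ∑ t ∈ Finset.range M, a t * b t) / ε + ∑ t ∈ Finset.range M, a t := by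
      intro n
      rcases le_or_gt M n with hMn | hMn
      · have h1 : ε * ∑ t ∈ Finset.Ico M n, a t ≤ ∑ t ∈ Finset.Ico M n, a t * b t := by
          rw [Finset.mul_sum]
          apply Finset.sum_le_sum
          intro i hi
          rw [Finset.mem_Ico] at hi
          have hbi := h i hi.1
          nlinarith [ha i]
        have h2 := hIco M n
        have h3 : ∑ t ∈ Finset.Ico M n, a t
            ≤ (S - ∑ t ∈ Finset.range M, a t * b t) / ε := by
          rw [le_div_iff₀ hε]
          nlinarith
        have h4 : ∑ t ∈ Finset.range n, a t
            = ∑ t ∈ Finset.range M, a t + ∑ t ∈ Finset.Ico M n, a t := by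
          rw [Finset.range_eq_Ico, Finset.range_eq_Ico]
          exact (Finset.sum_Ico_consecutive a (Nat.zero_le M) hMn).symm
        linarith
      · have : ∑ t ∈ Finset.range n, a t ≤ ∑ t ∈ Finset.range M, a t := by
          apply Finset.sum_le_sum_of_subset_of_nonneg
          · exact Finset.range_subset_range.2 (le_of_lt hMn)
          · intro i _ _; exact ha i
        have h5 : 0 ≤ (S - ∑ t ∈ Finset.range M, a t * b t) / ε := by
          apply div_nonneg _ (le_of_lt hε)
          linarith [hP M]
        linarith
    obtain ⟨n, hn⟩ := (tendsto_atTop.1 hdiv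
      ((S - ∑ t ∈ Finset.range M, a t * b t) / ε + ∑ t ∈ Finset.range M, a t + 1)).exists
    linarith [key n]
  -- Step 2: eventual bound
  have main : ∀ ε : ℝ, 0 < ε → ∃ N : ℕ, ∀ t, N ≤ t → b t < ε := by
    intro ε hε
    set ε' := ε / 2 with hε'def
    have hε' : 0 < ε' := by positivity
    set δ := ε' ^ 2 / (2 * K) with hδdef
    have hδ : 0 < δ := by positivity
    -- choose N with S - P n < δ for n ≥ N
    have htend : Tendsto (fun n => ∑ t ∈ Finset.range n, a t * b t) atTop (nhds S) :=
      hsum.hasSum.tendsto_sum_nat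
    obtain ⟨N, hN⟩ := (Metric.tendsto_atTop.1 htend δ hδ)
    have hNtail : ∀ m, N ≤ m → S - ∑ t ∈ Finset.range m, a t * b t < δ := by
      intro m hm
      have := hN m hm
      rw [Real.dist_eq, abs_sub_lt_iff] at this
      linarith [this.2]
    refine ⟨N, fun m hm => ?_⟩
    by_contra hbm
    push_neg at hbm
    have hbm2 : 2 * ε' ≤ b m := by
      rw [hε'def]; linarith
    -- find first descent below ε' after m
    have hex : ∃ n, m + 1 ≤ n ∧ b n ≤ ε' := hsmall ε' hε' (m + 1)
    set n := Nat.find hex with hndef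
    obtain ⟨hn1, hn2⟩ := Nat.find_spec hex
    have hmin : ∀ k, k < n → ¬(m + 1 ≤ k ∧ b k ≤ ε') := fun k hk => Nat.find_min hex hk
    have hmid : ∀ t, m ≤ t → t < n → ε' < b t := by
      intro t h1 h2
      rcases eq_or_lt_of_le h1 with rfl | h1'
      · linarith
      · have := hmin t h2
        push_neg at this
        exact this h1'
    have hmn : m < n := by omega
    -- telescoping bound
    have tel : b n - b m = ∑ i ∈ Finset.range (n - m), (b (m + i + 1) - b (m + i)) := by
      have h := Finset.sum_range_sub (fun i => b (m + i)) (n - m)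
      simp only [← Nat.add_assoc] at h
      rw [h, show m + (n - m) = n from by omega, Nat.add_zero]
    have habs : |b n - b m| ≤ K * ∑ t ∈ Finset.Ico m n, a t := by
      rw [tel]
      calc |∑ i ∈ Finset.range (n - m), (b (m + i + 1) - b (m + i))|
          ≤ ∑ i ∈ Finset.range (n - m), |b (m + i + 1) - b (m + i)| :=
            Finset.abs_sum_le_sum_abs _ _
        _ ≤ ∑ i ∈ Finset.range (n - m), K * a (m + i) :=
            Finset.sum_le_sum (fun i _ => hdiff (m + i))
        _ = K * ∑ t ∈ Finset.Ico m n, a t := by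
            rw [Finset.sum_Ico_eq_sum_range, ← Finset.mul_sum]
    have hdrop : ε' ≤ b m - b n := by linarith
    have hsumIco : ε' / K ≤ ∑ t ∈ Finset.Ico m n, a t := by
      rw [div_le_iff₀ hK]
      have : b m - b n ≤ |b n - b m| := by
        rw [abs_sub_comm]; exact le_abs_self _
      nlinarith
    have hcost : ε' * (ε' / K) ≤ ∑ t ∈ Finset.Ico m n, a t * b t := by
      calc ε' * (ε' / K) ≤ ε' * ∑ t ∈ Finset.Ico m n, a t := by
            apply mul_le_mul_of_nonneg_left hsumIco (le_of_lt hε')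
        _ ≤ ∑ t ∈ Finset.Ico m n, a t * b t := by
            rw [Finset.mul_sum]
            apply Finset.sum_le_sum
            intro i hi
            rw [Finset.mem_Ico] at hi
            have := hmid i hi.1 hi.2
            nlinarith [ha i]
    have hupper : ∑ t ∈ Finset.Ico m n, a t * b t < δ := by
      calc ∑ t ∈ Finset.Ico m n, a t * b t ≤ S - ∑ t ∈ Finset.range m, a t * b t := hIco m n
        _ < δ := hNtail m hm
    have : ε' * (ε' / K) = ε' ^ 2 / K := by ring
    rw [this] at hcost
    have hlt : ε' ^ 2 / K < ε' ^ 2 / (2 * K) := by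
      calc ε' ^ 2 / K ≤ ∑ t ∈ Finset.Ico m n, a t * b t := hcost
        _ < δ := hupper
    have : ε' ^ 2 / (2 * K) < ε' ^ 2 / K := by
      apply div_lt_div_of_pos_left (by positivity) hK
      linarith
    linarith
  -- conclude
  rw [Metric.tendsto_atTop]
  intro ε hε
  obtain ⟨N, hN⟩ := main ε hε
  refine ⟨N, fun t ht => ?_⟩
  rw [Real.dist_eq, sub_zero, abs_of_nonneg (hb t)]
  exact hN t ht
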